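/- Let m ≥ 4 with m ≡ 0 (mod 4), n = 3^m - 1. Consider the code C = {c(a,b) = (a(-1)^i + Tr_{F_9/F_3}(b ζ₄^i))_{i=0}^{n-1} : a ∈ F_3, b ∈ F_9}, where ζ₄ ∈ F_9 is a primitive 4th root of unity. Then C has exactly 27 codewords with weight distribution: 1 codeword of weight 0, 12 of weight (3^m-1)/2, 8 of weight (3/4)(3^m-1), and 6 of weight 3^m - 1. -/

import Mathlib

open Finset

lemma filter_mod_card (q k : ℕ) (hk : 0 < k) (P : ℕ → Prop) [DecidablePred P] :
    ((Finset.range (q * k)).filter (fun i => P (i % k))).card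
      = q * ((Finset.range k).filter P).card := by
  have himg : (Finset.range (q * k)).filter (fun i => P (i % k))
      = (Finset.range q ×ˢ (Finset.range k).filter P).image (fun p => p.1 * k + p.2) := by
    ext i
    simp only [Finset.mem_filter, Finset.mem_range, Finset.mem_image, Finset.mem_product]
    constructor
    · rintro ⟨hi, hP⟩
      refine ⟨(i / k, i % k), ⟨(Nat.div_lt_iff_lt_mul hk).2 hi, Nat.mod_lt _ hk, hP⟩, ?_⟩
      rw [mul_comm]
      exact Nat.div_add_mod i k
    · rintro ⟨⟨a, b⟩, ⟨ha, hb, hPb⟩, rfl⟩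
      have hmod : (a * k + b) % k = b := by
        rw [mul_comm, Nat.mul_add_mod, Nat.mod_eq_of_lt hb]
      refine ⟨?_, by rwa [hmod]⟩
      calc a * k + b < a * k + k := Nat.add_lt_add_left hb _
        _ = (a + 1) * k := (Nat.succ_mul a k).symm
        _ ≤ q * k := Nat.mul_le_mul_right k ha
  rw [himg, Finset.card_image_of_injOn, Finset.card_product, Finset.card_range]
  rintro ⟨a, b⟩ hab ⟨a', b'⟩ hab' h
  have hb : b < k := Finset.mem_range.mp (Finset.mem_filter.mp (Finset.mem_product.mp hab).2).1
  have hb' : b' < k := Finset.mem_range.mp (Finset.mem_filter.mp (Finset.mem_product.mp hab').2).1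
  have h1 : b = b' := by
    have := congrArg (· % k) h
    simpa [mul_comm _ k, Nat.mul_add_mod, Nat.mod_eq_of_lt hb, Nat.mod_eq_of_lt hb'] using this
  subst h1
  have : a = a' := by
    have h' : a * k + b = a' * k + b := h
    have : a * k = a' * k := by omega
    exact Nat.eq_of_mul_eq_mul_right hk this
  simp [this]

/-- weight count over one period, as a function of `(a, u, v)`. -/
def Ncount (a u v : ZMod 3) : ℕ :=
  (if a + u ≠ 0 then 1 else 0) + (if -a + v ≠ 0 then 1 else 0)
    + (if a - u ≠ 0 then 1 else 0) + (if -a - v ≠ 0 then 1 else 0)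

lemma zmod3_pow3 : ∀ y : ZMod 3, y ^ 3 = y := by decide

lemma Ncount_card0 : {x : ZMod 3 × ZMod 3 × ZMod 3 | Ncount x.1 x.2.1 x.2.2 = 0}.ncard = 1 := by
  rw [Set.ncard_eq_toFinset_card']
  simp only [Set.toFinset_setOf]
  decide

lemma Ncount_card2 : {x : ZMod 3 × ZMod 3 × ZMod 3 | Ncount x.1 x.2.1 x.2.2 = 2}.ncard = 12 := by
  rw [Set.ncard_eq_toFinset_card']
  simp only [Set.toFinset_setOf]
  decide

lemma Ncount_card3 : {x : ZMod 3 × ZMod 3 × ZMod 3 | Ncount x.1 x.2.1 x.2.2 = 3}.ncard = 8 := by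
  rw [Set.ncard_eq_toFinset_card']
  simp only [Set.toFinset_setOf]
  decide

lemma Ncount_card4 : {x : ZMod 3 × ZMod 3 × ZMod 3 | Ncount x.1 x.2.1 x.2.2 = 4}.ncard = 6 := by
  rw [Set.ncard_eq_toFinset_card']
  simp only [Set.toFinset_setOf]
  decide

theorem stmt17 (m : ℕ) (hm : 4 ≤ m) (h4 : m % 4 = 0)
    (F : Type*) [Field F] [Fintype F] [Algebra (ZMod 3) F]
    (hF : Fintype.card F = 9)
    (ζ₄ : F) (hζ : orderOf ζ₄ = 4) :
    let n := 3 ^ m - 1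
    let w : ZMod 3 → F → ℕ := fun a b =>
      {i : ℕ | i < n ∧
        a * (-1) ^ i + Algebra.trace (ZMod 3) F (b * ζ₄ ^ i) ≠ 0}.ncard
    {ab : ZMod 3 × F | w ab.1 ab.2 = 0}.ncard = 1 ∧
    {ab : ZMod 3 × F | w ab.1 ab.2 = (3 ^ m - 1) / 2}.ncard = 12 ∧
    {ab : ZMod 3 × F | w ab.1 ab.2 = 3 * (3 ^ m - 1) / 4}.ncard = 8 ∧
    {ab : ZMod 3 × F | w ab.1 ab.2 = 3 ^ m - 1}.ncard = 6 := by
  intro n w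
  haveI : Fact (Nat.Prime 3) := ⟨by norm_num⟩
  -- arithmetic about n
  have hmod16 : 3 ^ m % 16 = 1 := by
    obtain ⟨k, rfl⟩ : ∃ k, m = 4 * k := ⟨m / 4, by omega⟩
    rw [pow_mul, Nat.pow_mod]
    norm_num
  have hpow : 81 ≤ 3 ^ m := by
    calc (81:ℕ) = 3 ^ 4 := by norm_num
    _ ≤ 3 ^ m := Nat.pow_le_pow_right (by norm_num) hm
  have hn16 : 16 ∣ (3 ^ m - 1) := by omega
  set q : ℕ := (3 ^ m - 1) / 4 with hq
  have hn4 : 3 ^ m - 1 = q * 4 := by omega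
  have hqpos : 0 < q := by omega
  -- properties of ζ₄
  have hζ4 : ζ₄ ^ 4 = 1 := by rw [← hζ]; exact pow_orderOf_eq_one ζ₄
  have hζ2 : ζ₄ ^ 2 = -1 := by
    have hsq : ζ₄ ^ 2 * ζ₄ ^ 2 = 1 := by rw [← pow_add]; exact hζ4
    rcases mul_self_eq_one_iff.mp hsq with h | h
    · exfalso
      have := orderOf_dvd_of_pow_eq_one h
      rw [hζ] at this
      omega
    · exact h
  have hζ3 : ζ₄ ^ 3 = -ζ₄ := by
    have h' : ζ₄ ^ 3 = ζ₄ ^ 2 * ζ₄ := by ring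
    rw [h', hζ2, neg_one_mul]
  have hζ0 : ζ₄ ≠ 0 := by
    intro h
    rw [h] at hζ4
    simp at hζ4
  -- {1, ζ₄} is a basis of F over ZMod 3
  have hrank : Module.finrank (ZMod 3) F = 2 := by
    have hcard : Fintype.card F = 3 ^ Module.finrank (ZMod 3) F := by
      have := Module.card_eq_pow_finrank (K := ZMod 3) (V := F)
      simpa using this
    rw [hF, show (9:ℕ) = 3 ^ 2 by norm_num] at hcard
    exact (Nat.pow_right_injective (by norm_num) hcard.symm)
  have hnotin : ∀ x : ZMod 3, algebraMap (ZMod 3) F x ≠ ζ₄ := by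
    intro x hx
    have h3 : ζ₄ ^ 3 = ζ₄ := by rw [← hx, ← map_pow, zmod3_pow3 x]
    rw [hζ3] at h3
    have h2 : (2 : F) * ζ₄ = 0 := by linear_combination -h3
    rcases mul_eq_zero.mp h2 with h2' | h0
    · haveI : CharP F 3 := charP_of_injective_algebraMap (algebraMap (ZMod 3) F).injective 3
      have hc : ((2:ℕ) : F) = 0 := by push_cast; exact h2'
      have := (CharP.cast_eq_zero_iff F 3 2).mp hc
      omega
    · exact hζ0 h0
  have hli : LinearIndependent (ZMod 3) ![1, ζ₄] := by
    rw [LinearIndependent.pair_iff]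
    intro s t hst
    by_cases ht : t = 0
    · subst ht
      simp only [zero_smul, add_zero] at hst
      refine ⟨?_, rfl⟩
      have h1 : algebraMap (ZMod 3) F s = 0 := by
        rw [Algebra.algebraMap_eq_smul_one]; exact hst
      exact (map_eq_zero _).mp h1
    · exfalso
      apply hnotin (-s / t)
      have h1 : algebraMap (ZMod 3) F s + algebraMap (ZMod 3) F t * ζ₄ = 0 := by
        rw [Algebra.algebraMap_eq_smul_one, Algebra.algebraMap_eq_smul_one, smul_mul_assoc,
          one_mul]
        exact hst
      have ht' : algebraMap (ZMod 3) F t ≠ 0 := fun h => ht ((map_eq_zero _).mp h)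
      rw [map_div₀, map_neg]
      field_simp
      linear_combination -h1
  have hcard2 : Fintype.card (Fin 2) = Module.finrank (ZMod 3) F := by simp [hrank]
  set B := basisOfLinearIndependentOfCardEqFinrank hli hcard2 with hB
  have hBcoe : ⇑B = ![1, ζ₄] := coe_basisOfLinearIndependentOfCardEqFinrank hli hcard2
  -- the trace pairing map T is bijective
  set T : F → ZMod 3 × ZMod 3 :=
    fun b => (Algebra.trace (ZMod 3) F b, Algebra.trace (ZMod 3) F (b * ζ₄)) with hT
  have hTker : ∀ d : F, T d = 0 → d = 0 := by
    intro d hd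
    have h1 : Algebra.trace (ZMod 3) F d = 0 := congrArg Prod.fst hd
    have h2 : Algebra.trace (ZMod 3) F (d * ζ₄) = 0 := congrArg Prod.snd hd
    apply (traceForm_nondegenerate (ZMod 3) F).1 d
    intro c
    rw [Algebra.traceForm_apply]
    have hc : c = B.repr c 0 • (1:F) + B.repr c 1 • ζ₄ := by
      have hs := B.sum_repr c
      rw [Fin.sum_univ_two, hBcoe] at hs
      simpa using hs.symm
    rw [hc, mul_add, mul_smul_comm, mul_smul_comm, mul_one, map_add, map_smul, map_smul,
      h1, h2, smul_zero, smul_zero, add_zero]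
  have hTinj : Function.Injective T := by
    intro x y hxy
    have hd : T (x - y) = 0 := by
      have : T (x - y) = T x - T y := by
        simp only [hT, Prod.mk_sub_mk, sub_mul, map_sub]
      rw [this, hxy, sub_self]
    have := hTker _ hd
    exact sub_eq_zero.mp this
  have hTbij : Function.Bijective T :=
    (Fintype.bijective_iff_injective_and_card T).mpr ⟨hTinj, by simp [hF]⟩
  -- the weight formula
  have hw : ∀ a b, w a b = q * Ncount a (T b).1 (T b).2 := by
    intro a b
    have hper : ∀ i : ℕ,
        (a * (-1) ^ i + Algebra.trace (ZMod 3) F (b * ζ₄ ^ i) ≠ 0)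
          ↔ (a * (-1) ^ (i % 4) + Algebra.trace (ZMod 3) F (b * ζ₄ ^ (i % 4)) ≠ 0) := by
      intro i
      have hp1 : ((-1 : ZMod 3)) ^ i = (-1) ^ (i % 4) := by
        rw [neg_one_pow_eq_pow_mod_two, neg_one_pow_eq_pow_mod_two (n := i % 4),
          Nat.mod_mod_of_dvd i (by norm_num : 2 ∣ 4)]
      have hp2 : ζ₄ ^ i = ζ₄ ^ (i % 4) := by
        conv_rhs => rw [← hζ]
        rw [pow_mod_orderOf]
      rw [hp1, hp2]
    have hset : {i : ℕ | i < n ∧ a * (-1) ^ i + Algebra.trace (ZMod 3) F (b * ζ₄ ^ i) ≠ 0}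
        = ↑((Finset.range n).filter
            (fun i => a * (-1) ^ (i % 4) + Algebra.trace (ZMod 3) F (b * ζ₄ ^ (i % 4)) ≠ 0)) := by
      ext i
      simp only [Set.mem_setOf_eq, Finset.coe_filter, Finset.mem_range, hper i]
    have hw1 : w a b = ((Finset.range n).filter
        (fun i => a * (-1) ^ (i % 4) + Algebra.trace (ZMod 3) F (b * ζ₄ ^ (i % 4)) ≠ 0)).card := by
      show Set.ncard _ = _
      rw [hset, Set.ncard_coe_finset]
    have hn' : n = q * 4 := hn4
    have hfm := filter_mod_card q 4 (by norm_num)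
      (fun j => a * (-1) ^ j + Algebra.trace (ZMod 3) F (b * ζ₄ ^ j) ≠ 0)
    rw [hw1, hn', hfm]
    congr 1
    rw [Finset.card_filter, Finset.sum_range_succ, Finset.sum_range_succ, Finset.sum_range_succ,
      Finset.sum_range_succ, Finset.sum_range_zero, zero_add]
    have e0 : a * (-1) ^ (0:ℕ) + Algebra.trace (ZMod 3) F (b * ζ₄ ^ (0:ℕ))
        = a + (T b).1 := by simp [hT]
    have e1 : a * (-1) ^ (1:ℕ) + Algebra.trace (ZMod 3) F (b * ζ₄ ^ (1:ℕ))
        = -a + (T b).2 := by simp [hT]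
    have e2 : a * (-1) ^ (2:ℕ) + Algebra.trace (ZMod 3) F (b * ζ₄ ^ (2:ℕ))
        = a - (T b).1 := by
      rw [hζ2]
      simp [hT, sub_eq_add_neg]
    have e3 : a * (-1) ^ (3:ℕ) + Algebra.trace (ZMod 3) F (b * ζ₄ ^ (3:ℕ))
        = -a - (T b).2 := by
      rw [hζ3]
      simp [hT, sub_eq_add_neg]
    simp only [Ncount, e0, e1, e2, e3]
  -- counting via the bijection
  set e : ZMod 3 × F → ZMod 3 × ZMod 3 × ZMod 3 := fun ab => (ab.1, T ab.2) with he
  have hebij : Function.Bijective e := by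
    constructor
    · rintro ⟨a, b⟩ ⟨a', b'⟩ hab
      have h1 : a = a' := congrArg Prod.fst hab
      have h2 : T b = T b' := congrArg Prod.snd hab
      rw [h1, hTinj h2]
    · rintro ⟨a, u⟩
      obtain ⟨b, hb⟩ := hTbij.2 u
      exact ⟨(a, b), by simp [he, hb]⟩
  have hcount : ∀ (k cnt : ℕ),
      ({x : ZMod 3 × ZMod 3 × ZMod 3 | Ncount x.1 x.2.1 x.2.2 = k}.ncard = cnt) →
      {ab : ZMod 3 × F | Ncount ab.1 (T ab.2).1 (T ab.2).2 = k}.ncard = cnt := by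
    intro k cnt hcnt
    have hpre : {ab : ZMod 3 × F | Ncount ab.1 (T ab.2).1 (T ab.2).2 = k}
        = e ⁻¹' {x : ZMod 3 × ZMod 3 × ZMod 3 | Ncount x.1 x.2.1 x.2.2 = k} := rfl
    rw [hpre, ← Set.ncard_image_of_injective _ hebij.1,
      Set.image_preimage_eq _ hebij.2]
    exact hcnt
  -- final arithmetic rewriting of each target set
  have harith : ∀ (t k : ℕ), t = q * k →
      {ab : ZMod 3 × F | w ab.1 ab.2 = t}
        = {ab : ZMod 3 × F | Ncount ab.1 (T ab.2).1 (T ab.2).2 = k} := by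
    intro t k ht
    ext ab
    simp only [Set.mem_setOf_eq, hw ab.1 ab.2, ht]
    exact ⟨fun h => Nat.eq_of_mul_eq_mul_left hqpos h, fun h => by rw [h]⟩
  refine ⟨?_, ?_, ?_, ?_⟩
  · rw [harith 0 0 (by omega)]
    exact hcount _ _ Ncount_card0
  · rw [harith ((3 ^ m - 1) / 2) 2 (by omega)]
    exact hcount _ _ Ncount_card2
  · rw [harith (3 * (3 ^ m - 1) / 4) 3 (by omega)]
    exact hcount _ _ Ncount_card3
  · rw [harith (3 ^ m - 1) 4 (by omega)]
    exact hcount _ _ Ncount_card4
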